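/- Let γ > 0 and define g(ω,t) = (4/π) e^{−8γ t sin²(ω)} cos²(ω) for ω ∈ [0, π/2] and t > 0. Then √t · ∫_0^{π/2} g(ω,t) dω converges to 1/√(2πγ) as t → ∞. -/

import Mathlib

open Real Filter intervalIntegral MeasureTheory Set

private lemma sqrt_tendsto_atTop' : Tendsto Real.sqrt atTop atTop := by
  refine tendsto_atTop_atTop.2 fun b => ⟨(max b 0) ^ 2, fun a ha => ?_⟩
  refine le_trans (le_max_left b 0) ?_
  have := Real.sqrt_le_sqrt ha
  rwa [Real.sqrt_sq (le_max_right b 0)] at this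

private lemma sin_div_self_tendsto :
    Tendsto (fun x : ℝ => Real.sin x / x) (nhdsWithin 0 {(0:ℝ)}ᶜ) (nhds 1) := by
  have h : HasDerivAt Real.sin 1 0 := by simpa using Real.hasDerivAt_sin 0
  have := hasDerivAt_iff_tendsto_slope.mp h
  refine this.congr fun x => ?_
  simp [slope_def_field, div_eq_mul_inv, mul_comm]

/-- With `g(ω,t) = (4/π) e^{−8γt sin²ω} cos²ω`, one has
`√t · ∫₀^{π/2} g(ω,t) dω → 1/√(2πγ)` as `t → ∞`. -/
theorem current_correlation_decay (γ : ℝ) (hγ : 0 < γ) :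
    Tendsto (fun t : ℝ => Real.sqrt t *
        ∫ ω in (0:ℝ)..(π / 2), (4 / π) * Real.exp (-8 * γ * t * Real.sin ω ^ 2) * Real.cos ω ^ 2)
      atTop (nhds (1 / Real.sqrt (2 * π * γ))) := by
  have hπ : (0:ℝ) < π := Real.pi_pos
  set F : ℝ → ℝ → ℝ := fun t u =>
    Set.indicator (Set.Ioc 0 (π / 2 * Real.sqrt t))
      (fun u => (4 / π) * Real.exp (-8 * γ * t * Real.sin (u / Real.sqrt t) ^ 2) *
        Real.cos (u / Real.sqrt t) ^ 2) u with hFdef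
  set φ : ℝ → ℝ :=
    Set.indicator (Set.Ioi 0) (fun u => (4 / π) * Real.exp (-(8 * γ) * u ^ 2)) with hφdef
  set c : ℝ := 32 * γ / π ^ 2 with hcdef
  have hc : 0 < c := by positivity
  set bound : ℝ → ℝ :=
    Set.indicator (Set.Ioi 0) (fun u => (4 / π) * Real.exp (-c * u ^ 2)) with hbdef
  -- Step 1: identify the quantity with `∫ u, F t u` for t ≥ 1
  have key : ∀ t : ℝ, 1 ≤ t → (Real.sqrt t *
      ∫ ω in (0:ℝ)..(π / 2), (4 / π) * Real.exp (-8 * γ * t * Real.sin ω ^ 2) * Real.cos ω ^ 2)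
      = ∫ u, F t u := by
    intro t ht
    have ht0 : 0 < t := lt_of_lt_of_le one_pos ht
    have hst : 0 < Real.sqrt t := Real.sqrt_pos.2 ht0
    have hM : (0:ℝ) ≤ π / 2 * Real.sqrt t := by positivity
    rw [hFdef]
    rw [MeasureTheory.integral_indicator measurableSet_Ioc,
      ← intervalIntegral.integral_of_le hM]
    rw [intervalIntegral.integral_comp_div
      (f := fun ω => (4 / π) * Real.exp (-8 * γ * t * Real.sin ω ^ 2) * Real.cos ω ^ 2)
      hst.ne']
    rw [zero_div, mul_div_assoc, div_self hst.ne', mul_one, smul_eq_mul]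
  -- Step 2: dominated convergence
  have hmeas : ∀ᶠ t : ℝ in atTop, AEStronglyMeasurable (F t) volume := by
    filter_upwards with t
    refine ((Continuous.measurable ?_).indicator measurableSet_Ioc).aestronglyMeasurable
    fun_prop
  have h_bound : ∀ᶠ t : ℝ in atTop, ∀ᵐ u : ℝ, ‖F t u‖ ≤ bound u := by
    filter_upwards [eventually_ge_atTop (1:ℝ)] with t ht
    filter_upwards with u
    have ht0 : 0 < t := lt_of_lt_of_le one_pos ht
    have hst : 0 < Real.sqrt t := Real.sqrt_pos.2 ht0
    by_cases hu : u ∈ Set.Ioc 0 (π / 2 * Real.sqrt t)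
    · rw [hFdef]
      simp only
      rw [Set.indicator_of_mem hu]
      have hu0 : 0 < u := hu.1
      have hx0 : 0 < u / Real.sqrt t := div_pos hu0 hst
      have hxle : u / Real.sqrt t ≤ π / 2 := by
        rw [div_le_iff₀ hst]
        linarith [hu.2]
      have hsin : 2 / π * (u / Real.sqrt t) ≤ Real.sin (u / Real.sqrt t) :=
        Real.mul_le_sin hx0.le hxle
      have hsin0 : 0 < 2 / π * (u / Real.sqrt t) := by positivity
      have hsq : (2 / π * (u / Real.sqrt t)) ^ 2 ≤ Real.sin (u / Real.sqrt t) ^ 2 := by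
        exact pow_le_pow_left₀ hsin0.le hsin 2
      have hkey : c * u ^ 2 ≤ 8 * γ * t * Real.sin (u / Real.sqrt t) ^ 2 := by
        have h1 : (2 / π * (u / Real.sqrt t)) ^ 2 = 4 / π ^ 2 * u ^ 2 / t := by
          rw [mul_pow, div_pow, div_pow, Real.sq_sqrt ht0.le]
          ring
        have h2 : 8 * γ * t * (4 / π ^ 2 * u ^ 2 / t) = c * u ^ 2 := by
          field_simp [hcdef]
          rw [hcdef]; field_simp; norm_num
        calc c * u ^ 2 = 8 * γ * t * (4 / π ^ 2 * u ^ 2 / t) := h2.symm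
          _ ≤ 8 * γ * t * Real.sin (u / Real.sqrt t) ^ 2 := by
              apply mul_le_mul_of_nonneg_left (h1 ▸ hsq) (by positivity)
      have hcos : Real.cos (u / Real.sqrt t) ^ 2 ≤ 1 := by
        have := Real.neg_one_le_cos (u / Real.sqrt t)
        have := Real.cos_le_one (u / Real.sqrt t)
        nlinarith
      have hb : bound u = (4 / π) * Real.exp (-c * u ^ 2) := by
        rw [hbdef]; exact Set.indicator_of_mem hu0 _
      rw [hb, Real.norm_eq_abs, abs_of_nonneg (by positivity)]
      have hexp : Real.exp (-8 * γ * t * Real.sin (u / Real.sqrt t) ^ 2)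
          ≤ Real.exp (-c * u ^ 2) := by
        apply Real.exp_le_exp.2
        nlinarith
      calc (4 / π) * Real.exp (-8 * γ * t * Real.sin (u / Real.sqrt t) ^ 2) *
            Real.cos (u / Real.sqrt t) ^ 2
          ≤ (4 / π) * Real.exp (-8 * γ * t * Real.sin (u / Real.sqrt t) ^ 2) * 1 := by
            apply mul_le_mul_of_nonneg_left hcos (by positivity)
        _ = (4 / π) * Real.exp (-8 * γ * t * Real.sin (u / Real.sqrt t) ^ 2) := mul_one _
        _ ≤ (4 / π) * Real.exp (-c * u ^ 2) := by
            apply mul_le_mul_of_nonneg_left hexp (by positivity)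
    · rw [hFdef]
      simp only
      rw [Set.indicator_of_notMem hu, norm_zero]
      rw [hbdef]
      exact Set.indicator_nonneg (fun x _ => by positivity) u
  have h_int : Integrable bound volume := by
    rw [hbdef]
    exact (((integrable_exp_neg_mul_sq hc).const_mul (4 / π)).indicator measurableSet_Ioi)
  have h_lim : ∀ᵐ u : ℝ, Tendsto (fun t => F t u) atTop (nhds (φ u)) := by
    rw [MeasureTheory.ae_iff]
    refine MeasureTheory.measure_mono_null ?_ (MeasureTheory.measure_singleton (0:ℝ))
    · intro u hu
      simp only [Set.mem_setOf_eq] at hu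
      by_contra h0
      apply hu
      have hne : u ≠ 0 := by simpa using h0
      rcases hne.lt_or_gt with hneg | hpos
      · -- u < 0 : F t u = 0 = φ u for all t
        have hφ0 : φ u = 0 := by
          rw [hφdef]
          exact Set.indicator_of_notMem (by simp [Set.mem_Ioi]; linarith) _
        rw [hφ0]
        apply tendsto_const_nhds.congr
        intro t
        rw [hFdef]
        exact (Set.indicator_of_notMem (fun h => absurd h.1 (by linarith)) _).symm
      · -- u > 0
        have hφu : φ u = (4 / π) * Real.exp (-(8 * γ) * u ^ 2) := by
          rw [hφdef]; exact Set.indicator_of_mem hpos _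
        rw [hφu]
        -- inner limit: u / √t → 0 within ≠ 0
        have hdiv : Tendsto (fun t : ℝ => u / Real.sqrt t) atTop (nhds 0) :=
          tendsto_const_nhds.div_atTop sqrt_tendsto_atTop'
        have hdiv' : Tendsto (fun t : ℝ => u / Real.sqrt t) atTop
            (nhdsWithin 0 {(0:ℝ)}ᶜ) := by
          apply tendsto_nhdsWithin_of_tendsto_nhds_of_eventually_within _ hdiv
          filter_upwards [eventually_gt_atTop (0:ℝ)] with t ht
          have : 0 < u / Real.sqrt t := div_pos hpos (Real.sqrt_pos.2 ht)
          simp [this.ne']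
        -- t sin(u/√t)² → u²
        have hts : Tendsto (fun t : ℝ => t * Real.sin (u / Real.sqrt t) ^ 2) atTop
            (nhds (u ^ 2)) := by
          have houter : Tendsto (fun x : ℝ => u ^ 2 * (Real.sin x / x) ^ 2)
              (nhdsWithin 0 {(0:ℝ)}ᶜ) (nhds (u ^ 2 * 1 ^ 2)) :=
            tendsto_const_nhds.mul (sin_div_self_tendsto.pow 2)
          have hcomp := houter.comp hdiv'
          rw [show u ^ 2 * 1 ^ 2 = u ^ 2 by ring] at hcomp
          apply hcomp.congr'
          filter_upwards [eventually_gt_atTop (0:ℝ)] with t ht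
          have hst : 0 < Real.sqrt t := Real.sqrt_pos.2 ht
          have hx : u / Real.sqrt t ≠ 0 := (div_pos hpos hst).ne'
          simp only [Function.comp_apply]
          rw [div_pow, div_pow, Real.sq_sqrt ht.le]
          field_simp
        -- exp part
        have hexp : Tendsto (fun t : ℝ =>
            Real.exp (-8 * γ * t * Real.sin (u / Real.sqrt t) ^ 2)) atTop
            (nhds (Real.exp (-(8 * γ) * u ^ 2))) := by
          have : Tendsto (fun t : ℝ => -(8 * γ) * (t * Real.sin (u / Real.sqrt t) ^ 2))
              atTop (nhds (-(8 * γ) * u ^ 2)) := tendsto_const_nhds.mul hts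
          have := (Real.continuous_exp.tendsto _).comp this
          apply this.congr
          intro t
          simp only [Function.comp_apply]
          ring_nf
        -- cos part
        have hcos : Tendsto (fun t : ℝ => Real.cos (u / Real.sqrt t) ^ 2) atTop
            (nhds 1) := by
          have := ((Real.continuous_cos.tendsto 0).comp hdiv).pow 2
          simpa using this
        have hmain : Tendsto (fun t : ℝ =>
            (4 / π) * Real.exp (-8 * γ * t * Real.sin (u / Real.sqrt t) ^ 2) *
              Real.cos (u / Real.sqrt t) ^ 2) atTop
            (nhds ((4 / π) * Real.exp (-(8 * γ) * u ^ 2))) := by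
          have h4 : Tendsto (fun _ : ℝ => (4 / π : ℝ)) atTop (nhds (4 / π)) :=
            tendsto_const_nhds
          have := (h4.mul hexp).mul hcos
          simpa using this
        apply hmain.congr'
        filter_upwards [eventually_ge_atTop (max 1 ((2 * u / π) ^ 2))] with t ht
        have ht1 : (1:ℝ) ≤ t := le_trans (le_max_left _ _) ht
        have ht0 : 0 < t := lt_of_lt_of_le one_pos ht1
        have hmem : u ∈ Set.Ioc 0 (π / 2 * Real.sqrt t) := by
          constructor
          · exact hpos
          · have h2 : (2 * u / π) ^ 2 ≤ t := le_trans (le_max_right _ _) ht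
            have h3 : 2 * u / π ≤ Real.sqrt t := by
              rw [show Real.sqrt t = Real.sqrt t from rfl]
              have := Real.sqrt_le_sqrt h2
              rwa [Real.sqrt_sq (by positivity)] at this
            calc u = 2 * u / π * (π / 2) := by field_simp
              _ ≤ Real.sqrt t * (π / 2) := by
                  apply mul_le_mul_of_nonneg_right h3 (by positivity)
              _ = π / 2 * Real.sqrt t := mul_comm _ _
        simp only [hFdef]
        exact (Set.indicator_of_mem hmem (fun u => 4 / π *
          Real.exp (-8 * γ * t * Real.sin (u / Real.sqrt t) ^ 2) *
          Real.cos (u / Real.sqrt t) ^ 2)).symm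
  have hDCT := MeasureTheory.tendsto_integral_filter_of_dominated_convergence
    (μ := volume) (F := F) (f := φ) bound hmeas h_bound h_int h_lim
  -- Step 3: compute ∫ φ
  have hφint : ∫ u, φ u = 1 / Real.sqrt (2 * π * γ) := by
    rw [hφdef, MeasureTheory.integral_indicator measurableSet_Ioi,
      MeasureTheory.integral_const_mul, integral_gaussian_Ioi (8 * γ)]
    have h8 : (0:ℝ) < 8 * γ := by positivity
    calc (4 / π) * (Real.sqrt (π / (8 * γ)) / 2)
        = Real.sqrt ((2 / π) ^ 2) * Real.sqrt (π / (8 * γ)) := by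
          rw [Real.sqrt_sq (by positivity)]; ring
      _ = Real.sqrt ((2 / π) ^ 2 * (π / (8 * γ))) := (Real.sqrt_mul (by positivity) _).symm
      _ = Real.sqrt ((2 * π * γ)⁻¹) := by
          congr 1
          field_simp
          ring
      _ = (Real.sqrt (2 * π * γ))⁻¹ := Real.sqrt_inv _
      _ = 1 / Real.sqrt (2 * π * γ) := (one_div _).symm
  rw [← hφint]
  apply hDCT.congr'
  filter_upwards [eventually_ge_atTop (1:ℝ)] with t ht
  exact (key t ht).symm
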